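/- (Mean curvature comparison for touching graphs; the classical content of the spacelike comparison lemma, Lemma 2, for hypersurfaces given as graphs over Euclidean space.) Let n be a natural number, E = EuclideanSpace ℝ (Fin n), and let f, g : E → ℝ be twice continuously differentiable with g(x) ≤ f(x) for all x ∈ E and f(p) = g(p) at some point p. Then the mean curvatures of the graphs of f and g at p, computed with respect to the upward normal, satisfy H[f](p) ≥ H[g](p), where for a twice continuously differentiable u : E → ℝ one defines H[u](p) = ((1 + ‖∇u(p)‖²)·Δu(p) − Hess u(p)(∇u(p), ∇u(p))) · (1 + ‖∇u(p)‖²)^(−3/2). -/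

import Mathlib

open scoped RealInnerProductSpace

/-- The Hessian of `u` at `p` evaluated on the pair `(v, w)`. -/
noncomputable def hess {n : ℕ} (u : EuclideanSpace ℝ (Fin n) → ℝ)
    (p v w : EuclideanSpace ℝ (Fin n)) : ℝ :=
  iteratedFDeriv ℝ 2 u p ![v, w]

/-- The Laplacian of `u` at `p`: the sum of the Hessian over the standard
orthonormal basis of Euclidean space. -/
noncomputable def lapl {n : ℕ} (u : EuclideanSpace ℝ (Fin n) → ℝ)
    (p : EuclideanSpace ℝ (Fin n)) : ℝ :=
  ∑ i : Fin n, hess u p (EuclideanSpace.single i 1) (EuclideanSpace.single i 1)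

/-- Mean curvature of the graph of `u` at `p` with respect to the upward
normal: H[u](p) = ((1 + ‖∇u‖²)Δu − Hess u(∇u, ∇u)) (1 + ‖∇u‖²)^(−3/2). -/
noncomputable def meanCurv {n : ℕ} (u : EuclideanSpace ℝ (Fin n) → ℝ)
    (p : EuclideanSpace ℝ (Fin n)) : ℝ :=
  ((1 + ‖gradient u p‖ ^ 2) * lapl u p -
      hess u p (gradient u p) (gradient u p)) *
    (1 + ‖gradient u p‖ ^ 2) ^ (-(3 : ℝ) / 2)

/-- 1D second derivative test at a global minimum. -/
lemma secondDeriv_nonneg_of_min {φ : ℝ → ℝ} (hφ : ContDiff ℝ 2 φ)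
    (hmin : ∀ t, φ 0 ≤ φ t) : 0 ≤ deriv (deriv φ) 0 := by
  have hd : Differentiable ℝ φ := hφ.differentiable two_ne_zero
  have hψ : ContDiff ℝ 1 (deriv φ) := by
    have h2 : ContDiff ℝ ((1 : ℕ) + 1) φ := by exact_mod_cast hφ
    exact ((contDiff_succ_iff_deriv).mp h2).2.2
  have hψd : Differentiable ℝ (deriv φ) := hψ.differentiable one_ne_zero
  have hcont : Continuous (deriv (deriv φ)) := ((contDiff_one_iff_deriv).mp hψ).2
  have hzero : deriv φ 0 = 0 := by
    have : IsLocalMin φ 0 := Filter.Eventually.of_forall hmin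
    exact this.deriv_eq_zero
  by_contra hneg
  push_neg at hneg
  have hopen : IsOpen {x : ℝ | deriv (deriv φ) x < 0} :=
    isOpen_lt hcont continuous_const
  obtain ⟨ε, hε, hball⟩ := Metric.isOpen_iff.mp hopen 0 hneg
  set δ := ε / 2 with hδ
  have hδpos : 0 < δ := by positivity
  have hsub : Set.Icc (0:ℝ) δ ⊆ Metric.ball 0 ε := by
    intro x hx
    simp only [Metric.mem_ball, Real.dist_eq, sub_zero]
    rw [abs_of_nonneg hx.1]
    linarith [hx.2]
  have hanti : StrictAntiOn (deriv φ) (Set.Icc 0 δ) := by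
    apply strictAntiOn_of_deriv_neg (convex_Icc 0 δ) (hψ.continuous.continuousOn)
    intro x hx
    rw [interior_Icc] at hx
    exact hball (hsub ⟨le_of_lt hx.1, le_of_lt hx.2⟩)
  have hderivneg : ∀ x ∈ Set.Ioo (0:ℝ) δ, deriv φ x < 0 := by
    intro x hx
    have := hanti (Set.left_mem_Icc.mpr hδpos.le) ⟨hx.1.le, hx.2.le⟩ hx.1
    rwa [hzero] at this
  have hanti2 : StrictAntiOn φ (Set.Icc 0 δ) :=
    strictAntiOn_of_deriv_neg (convex_Icc 0 δ) hd.continuous.continuousOn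
      (fun x hx => by rw [interior_Icc] at hx; exact hderivneg x hx)
  have := hanti2 (Set.left_mem_Icc.mpr hδpos.le) (Set.right_mem_Icc.mpr hδpos.le) hδpos
  exact absurd (hmin δ) (not_le.mpr this)

/-- Second-derivative test: at a global min, the second fderiv is PSD on the diagonal. -/
lemma snd_fderiv_nonneg_of_min {n : ℕ} {h : EuclideanSpace ℝ (Fin n) → ℝ}
    (hh : ContDiff ℝ 2 h) {p : EuclideanSpace ℝ (Fin n)} (hmin : ∀ x, h p ≤ h x)
    (v : EuclideanSpace ℝ (Fin n)) : 0 ≤ fderiv ℝ (fderiv ℝ h) p v v := by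
  set φ : ℝ → ℝ := fun t => h (p + t • v) with hφdef
  have hline : ContDiff ℝ 2 (fun t : ℝ => p + t • v) :=
    contDiff_const.add (contDiff_id.smul contDiff_const)
  have hφ : ContDiff ℝ 2 φ := hh.comp hline
  have hlineDeriv : ∀ t : ℝ, HasDerivAt (fun s : ℝ => p + s • v) v t := by
    intro t
    simpa using (((hasDerivAt_id t).smul_const v).const_add p)
  have hφ' : deriv φ = fun t => fderiv ℝ h (p + t • v) v := by
    funext t
    exact (((hh.differentiable two_ne_zero) _).hasFDerivAt.comp_hasDerivAt t (hlineDeriv t)).deriv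
  have hf' : ContDiff ℝ 1 (fderiv ℝ h) := hh.fderiv_right (by norm_num)
  have h1 : HasDerivAt (fun t : ℝ => fderiv ℝ h (p + t • v)) (fderiv ℝ (fderiv ℝ h) p v) 0 := by
    have h0 : HasFDerivAt (fderiv ℝ h) (fderiv ℝ (fderiv ℝ h) (p + (0:ℝ) • v)) (p + (0:ℝ) • v) :=
      ((hf'.differentiable one_ne_zero) _).hasFDerivAt
    have := h0.comp_hasDerivAt 0 (hlineDeriv 0)
    simpa [Function.comp_def] using this
  have key : HasDerivAt (fun t : ℝ => fderiv ℝ h (p + t • v) v)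
      (fderiv ℝ (fderiv ℝ h) p v v) 0 := by
    simpa using h1.clm_apply (hasDerivAt_const 0 v)
  have hmin' : ∀ t, φ 0 ≤ φ t := by
    intro t
    simp only [hφdef, zero_smul, add_zero]
    exact hmin _
  have := secondDeriv_nonneg_of_min hφ hmin'
  rwa [hφ', key.deriv] at this

/-- Cauchy–Schwarz for a PSD symmetric continuous bilinear form. -/
lemma bilin_sq_le {n : ℕ} {B : EuclideanSpace ℝ (Fin n) →L[ℝ] EuclideanSpace ℝ (Fin n) →L[ℝ] ℝ}
    (hsymm : ∀ v w, B v w = B w v) (hpos : ∀ v, 0 ≤ B v v)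
    (v w : EuclideanSpace ℝ (Fin n)) : (B v w) ^ 2 ≤ B v v * B w w := by
  have hquad : ∀ t : ℝ, 0 ≤ B w w * (t * t) + (2 * B v w) * t + B v v := by
    intro t
    have := hpos (v + t • w)
    simp only [map_add, map_smul, ContinuousLinearMap.add_apply,
      ContinuousLinearMap.smul_apply, smul_eq_mul] at this
    have e : B w w * (t * t) + 2 * B v w * t + B v v
        = B v v + t * B w v + t * (B v w + t * B w w) := by
      rw [hsymm v w]; ring
    rw [e]; exact this
  have := discrim_le_zero hquad
  rw [discrim] at this
  nlinarith [this]

set_option maxHeartbeats 1000000 in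
/-- Mean curvature comparison for touching graphs: if g ≤ f everywhere and the
graphs touch at p, then the mean curvature of the graph of f at p (upward
normal) is at least that of the graph of g. -/
theorem meanCurv_comparison {n : ℕ}
    (f g : EuclideanSpace ℝ (Fin n) → ℝ)
    (hf : ContDiff ℝ 2 f) (hg : ContDiff ℝ 2 g)
    (hle : ∀ x, g x ≤ f x) (p : EuclideanSpace ℝ (Fin n)) (heq : f p = g p) :
    meanCurv f p ≥ meanCurv g p := by
  set h : EuclideanSpace ℝ (Fin n) → ℝ := fun x => f x - g x with hhdef
  have hh : ContDiff ℝ 2 h := hf.sub hg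
  have hmin : ∀ x, h p ≤ h x := by
    intro x
    simp only [hhdef]
    linarith [hle x, heq.le, heq.ge]
  -- gradient equality
  have hdf : DifferentiableAt ℝ f p := (hf.differentiable two_ne_zero) p
  have hdg : DifferentiableAt ℝ g p := (hg.differentiable two_ne_zero) p
  have hfd0 : fderiv ℝ h p = 0 := by
    have hloc : IsLocalMin h p := Filter.Eventually.of_forall hmin
    exact hloc.fderiv_eq_zero
  have hfderiv_eq : fderiv ℝ f p = fderiv ℝ g p := by
    have := fderiv_sub hdf hdg
    rw [show f - g = h from rfl] at this
    rw [this] at hfd0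
    exact sub_eq_zero.mp hfd0
  have hgrad : gradient f p = gradient g p := by
    simp only [gradient, hfderiv_eq]
  -- the bilinear form
  set B : EuclideanSpace ℝ (Fin n) →L[ℝ] EuclideanSpace ℝ (Fin n) →L[ℝ] ℝ := fderiv ℝ (fderiv ℝ h) p with hBdef
  have hBpos : ∀ v, 0 ≤ B v v := snd_fderiv_nonneg_of_min hh hmin
  have hBsymm : ∀ v w, B v w = B w v := fun v w =>
    (hh.contDiffAt.isSymmSndFDerivAt (by simp [minSmoothness_of_isRCLikeNormedField])).eq v w
  -- hessian splitting
  have hh2 : ContDiff ℝ ((2 : ℕ) : WithTop ℕ∞) h := by exact_mod_cast hh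
  have hg2 : ContDiff ℝ ((2 : ℕ) : WithTop ℕ∞) g := by exact_mod_cast hg
  have hsplit : ∀ v w : EuclideanSpace ℝ (Fin n), hess f p v w = B v w + hess g p v w := by
    intro v w
    have hfeq : iteratedFDeriv ℝ 2 f p = iteratedFDeriv ℝ 2 (fun x => h x + g x) p := by
      congr 1
      funext x
      simp [hhdef]
    have hBvw : hess h p v w = B v w := by
      rw [hess, iteratedFDeriv_two_apply]
      simp [hBdef]
    rw [hess, hfeq, iteratedFDeriv_add_apply' hh2.contDiffAt hg2.contDiffAt]
    simp only [ContinuousMultilinearMap.add_apply]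
    rw [← hBvw]
    rfl
  set e : Fin n → EuclideanSpace ℝ (Fin n) := fun i => EuclideanSpace.single i (1 : ℝ) with hedef
  set S : ℝ := ∑ i : Fin n, B (e i) (e i) with hSdef
  have hSnonneg : 0 ≤ S := Finset.sum_nonneg fun i _ => hBpos (e i)
  have hlapl : lapl f p = S + lapl g p := by
    rw [lapl, lapl, hSdef, ← Finset.sum_add_distrib]
    exact Finset.sum_congr rfl fun i _ => hsplit (e i) (e i)
  set G : EuclideanSpace ℝ (Fin n) := gradient g p with hGdef
  -- expand B G G as a double sum
  have hGsum : G = ∑ i : Fin n, G i • e i := by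
    have := (EuclideanSpace.basisFun (Fin n) ℝ).sum_repr G
    simp only [EuclideanSpace.basisFun_repr, EuclideanSpace.basisFun_apply] at this
    exact this.symm
  have hBGG : B G G = ∑ i : Fin n, ∑ j : Fin n, (G i * G j) * B (e i) (e j) := by
    conv_lhs => rw [hGsum]
    simp only [map_sum, map_smul, ContinuousLinearMap.sum_apply,
      ContinuousLinearMap.smul_apply, ContinuousLinearMap.coe_sum', Finset.sum_apply,
      smul_eq_mul, Finset.mul_sum]
    exact Finset.sum_congr rfl fun i _ => Finset.sum_congr rfl fun j _ => by rw [hBsymm (e i) (e j)]; ring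
  have hnormsq : ‖G‖ ^ 2 = ∑ i : Fin n, (G i) ^ 2 := by
    rw [EuclideanSpace.norm_eq, Real.sq_sqrt (by positivity)]
    exact Finset.sum_congr rfl fun i _ => by rw [Real.norm_eq_abs, sq_abs]
  have hstep : B G G ≤ ‖G‖ ^ 2 * S := by
    calc B G G = ∑ i : Fin n, ∑ j : Fin n, (G i * G j) * B (e i) (e j) := hBGG
      _ ≤ ∑ i : Fin n, ∑ j : Fin n,
          (|G i| * Real.sqrt (B (e i) (e i))) * (|G j| * Real.sqrt (B (e j) (e j))) := by
          refine Finset.sum_le_sum fun i _ => Finset.sum_le_sum fun j _ => ?_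
          have hcs : (B (e i) (e j)) ^ 2 ≤ B (e i) (e i) * B (e j) (e j) :=
            bilin_sq_le hBsymm hBpos _ _
          have habs : |B (e i) (e j)| ≤
              Real.sqrt (B (e i) (e i)) * Real.sqrt (B (e j) (e j)) := by
            rw [← Real.sqrt_sq_eq_abs, ← Real.sqrt_mul (hBpos (e i))]
            exact Real.sqrt_le_sqrt hcs
          calc (G i * G j) * B (e i) (e j) ≤ |(G i * G j) * B (e i) (e j)| := le_abs_self _
            _ = (|G i| * |G j|) * |B (e i) (e j)| := by rw [abs_mul, abs_mul]
            _ ≤ (|G i| * |G j|) *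
                (Real.sqrt (B (e i) (e i)) * Real.sqrt (B (e j) (e j))) :=
              mul_le_mul_of_nonneg_left habs (by positivity)
            _ = (|G i| * Real.sqrt (B (e i) (e i))) * (|G j| * Real.sqrt (B (e j) (e j))) := by
              ring
      _ = (∑ i : Fin n, |G i| * Real.sqrt (B (e i) (e i))) ^ 2 := by
          rw [sq, Finset.sum_mul_sum]
      _ ≤ (∑ i : Fin n, |G i| ^ 2) * (∑ i : Fin n, (Real.sqrt (B (e i) (e i))) ^ 2) :=
          Finset.sum_mul_sq_le_sq_mul_sq _ _ _
      _ = ‖G‖ ^ 2 * S := by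
          rw [hnormsq, hSdef]
          congr 1
          · exact Finset.sum_congr rfl fun i _ => sq_abs _
          · exact Finset.sum_congr rfl fun i _ => Real.sq_sqrt (hBpos (e i))
  -- final assembly
  have hc : (0:ℝ) < (1 + ‖G‖ ^ 2) ^ (-(3 : ℝ) / 2) :=
    Real.rpow_pos_of_pos (by positivity) _
  rw [ge_iff_le, meanCurv, meanCurv, hgrad, ← hGdef, hlapl, hsplit G G]
  apply mul_le_mul_of_nonneg_right _ hc.le
  nlinarith [hstep, hSnonneg, sq_nonneg ‖G‖]
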